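/- Let P ⊆ ℝ^d be a full-dimensional lattice polytope with codegree a satisfying P = ⌊aP⌋ + {P}. Then aP = ⌊aP⌋ + {aP}, and moreover {aP} = (a−1)P + {P}. (Here {aP} denotes the remainder polytope of the lattice polytope aP, whose codegree is 1, so {aP} = conv({x ∈ ℤ^d : n_F(x) ≥ −1 for all facets F of P}).) -/

import Mathlib

open Set Pointwise

/-- The set of lattice points of `ℝ^d`. -/
def latticePoints (d : ℕ) : Set (Fin d → ℝ) :=
  {x | ∀ i, ∃ z : ℤ, x i = (z : ℝ)}

/-- A lattice polytope: the convex hull of a finite set of lattice points. -/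
def IsLatticePolytope {d : ℕ} (P : Set (Fin d → ℝ)) : Prop :=
  ∃ V : Finset (Fin d → ℝ), (V : Set (Fin d → ℝ)) ⊆ latticePoints d ∧
    P = convexHull ℝ (V : Set (Fin d → ℝ))

/-- The natural pairing of an integral linear functional with a point of `ℝ^d`. -/
def pairing {d : ℕ} (n : Fin d → ℤ) (x : Fin d → ℝ) : ℝ :=
  ∑ i, (n i : ℝ) * x i

/-- `P = {x | n_F(x) ≥ -h_F}` is an irredundant presentation with primitive
integral inner normals, i.e. the facet presentation of `P`. -/
def IsFacetPresentation {d m : ℕ} (P : Set (Fin d → ℝ))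
    (n : Fin m → Fin d → ℤ) (h : Fin m → ℤ) : Prop :=
  P = {x | ∀ i, pairing (n i) x ≥ -(h i : ℝ)} ∧
  (∀ i, Finset.univ.gcd (n i) = 1) ∧
  (∀ i, ∃ x : Fin d → ℝ, pairing (n i) x < -(h i : ℝ) ∧
    ∀ j, j ≠ i → pairing (n j) x ≥ -(h j : ℝ))

/-- `a` is the codegree of `P`: the least `k ≥ 1` such that `int(kP)` contains
a lattice point. -/
def IsCodegree {d : ℕ} (P : Set (Fin d → ℝ)) (a : ℕ) : Prop :=
  1 ≤ a ∧ (interior ((a : ℝ) • P) ∩ latticePoints d).Nonempty ∧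
    ∀ k : ℕ, 1 ≤ k → (interior ((k : ℝ) • P) ∩ latticePoints d).Nonempty → a ≤ k

/-- The floor polytope `⌊R⌋ = conv(int(R) ∩ ℤ^d)`. -/
def floorPoly {d : ℕ} (R : Set (Fin d → ℝ)) : Set (Fin d → ℝ) :=
  convexHull ℝ (interior R ∩ latticePoints d)

/-- The remainder polytope `{P} = conv{x ∈ ℤ^d | n_F(x) ≥ (a-1)h_F - 1}`,
defined in terms of the facet presentation data and the codegree `a`. -/
def remPoly {d m : ℕ} (n : Fin m → Fin d → ℤ) (h : Fin m → ℤ) (a : ℕ) :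
    Set (Fin d → ℝ) :=
  convexHull ℝ {x | x ∈ latticePoints d ∧
    ∀ i, pairing (n i) x ≥ ((a : ℝ) - 1) * (h i : ℝ) - 1}

/-- The cone `C_P ⊆ ℝ^d × ℝ` over `P`, in terms of the facet presentation. -/
def coneOver {d m : ℕ} (n : Fin m → Fin d → ℤ) (h : Fin m → ℤ) :
    Set ((Fin d → ℝ) × ℝ) :=
  {p | ∀ i, pairing (n i) p.1 ≥ -(p.2 * (h i : ℝ))}

/-- The interior `int(C_P)` of the cone over `P`. -/
def intCone {d m : ℕ} (n : Fin m → Fin d → ℤ) (h : Fin m → ℤ) :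
    Set ((Fin d → ℝ) × ℝ) :=
  {p | ∀ i, pairing (n i) p.1 > -(p.2 * (h i : ℝ))}

/-- The anticanonical set `ant(C_P)` of the cone over `P`. -/
def antCone {d m : ℕ} (n : Fin m → Fin d → ℤ) (h : Fin m → ℤ) :
    Set ((Fin d → ℝ) × ℝ) :=
  {p | ∀ i, pairing (n i) p.1 ≥ -(p.2 * (h i : ℝ)) - 1}

/-- Lattice points of `ℝ^d × ℝ = ℝ^{d+1}`. -/
def latticePairs (d : ℕ) : Set ((Fin d → ℝ) × ℝ) :=
  {p | p.1 ∈ latticePoints d ∧ ∃ z : ℤ, p.2 = (z : ℝ)}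

/-- The nearly Gorenstein condition with respect to a given facet presentation:
`(C_P ∩ ℤ^{d+1}) \ {0} ⊆ (int(C_P) ∩ ℤ^{d+1}) + (ant(C_P) ∩ ℤ^{d+1})`. -/
def NGIncl {d m : ℕ} (n : Fin m → Fin d → ℤ) (h : Fin m → ℤ) : Prop :=
  (coneOver n h ∩ latticePairs d) \ {(0 : (Fin d → ℝ) × ℝ)} ⊆
    (intCone n h ∩ latticePairs d) + (antCone n h ∩ latticePairs d)

/-- A full-dimensional lattice polytope is nearly Gorenstein if the nearly
Gorenstein inclusion holds for its facet presentation. -/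
def NearlyGorenstein {d : ℕ} (P : Set (Fin d → ℝ)) : Prop :=
  ∃ (m : ℕ) (n : Fin m → Fin d → ℤ) (h : Fin m → ℤ),
    IsFacetPresentation P n h ∧ NGIncl n h

/-- The polar dual `Q* = {y | y(x) ≥ -1 for all x ∈ Q}`. -/
def polarDual {d : ℕ} (Q : Set (Fin d → ℝ)) : Set (Fin d → ℝ) :=
  {y | ∀ x ∈ Q, (∑ i, y i * x i) ≥ -1}

/-- A reflexive polytope: a lattice polytope with `0` in its interior whose
polar dual is again a lattice polytope. -/
def IsReflexive {d : ℕ} (Q : Set (Fin d → ℝ)) : Prop :=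
  IsLatticePolytope Q ∧ (0 : Fin d → ℝ) ∈ interior Q ∧
    IsLatticePolytope (polarDual Q)

/-- A Gorenstein polytope: some dilate `kP`, translated by a lattice vector,
is reflexive. -/
def IsGorenstein {d : ℕ} (P : Set (Fin d → ℝ)) : Prop :=
  ∃ (k : ℕ) (w : Fin d → ℝ), 1 ≤ k ∧ w ∈ latticePoints d ∧
    IsReflexive ((fun x => x - w) '' ((k : ℝ) • P))

/-- The integer decomposition property. -/
def IsIDP {d : ℕ} (P : Set (Fin d → ℝ)) : Prop :=
  ∀ k : ℕ, 1 ≤ k → ∀ x ∈ ((k : ℝ) • P) ∩ latticePoints d,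
    ∃ y : Fin k → Fin d → ℝ, (∀ j, y j ∈ P ∩ latticePoints d) ∧ x = ∑ j, y j

/-- Minkowski indecomposability of a lattice polytope. -/
def IsIndecomposable {d : ℕ} (P : Set (Fin d → ℝ)) : Prop :=
  (¬ ∃ p : Fin d → ℝ, P = {p}) ∧
  ∀ P₁ P₂ : Set (Fin d → ℝ), IsLatticePolytope P₁ → IsLatticePolytope P₂ →
    P = P₁ + P₂ → (∃ p, P₁ = {p}) ∨ (∃ p, P₂ = {p})

/-- A `(0,1)`-polytope: the convex hull of a set of `(0,1)`-vectors. -/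
def Is01Polytope {d : ℕ} (P : Set (Fin d → ℝ)) : Prop :=
  ∃ V : Finset (Fin d → ℝ), (∀ v ∈ V, ∀ i, v i = 0 ∨ v i = 1) ∧
    P = convexHull ℝ (V : Set (Fin d → ℝ))


lemma pairing_add {d : ℕ} (n : Fin d → ℤ) (x y : Fin d → ℝ) :
    pairing n (x + y) = pairing n x + pairing n y := by
  simp [pairing, mul_add, Finset.sum_add_distrib]

lemma pairing_smul {d : ℕ} (n : Fin d → ℤ) (c : ℝ) (x : Fin d → ℝ) :
    pairing n (c • x) = c * pairing n x := by
  simp only [pairing, Finset.mul_sum, Pi.smul_apply, smul_eq_mul]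
  exact Finset.sum_congr rfl fun i _ => by ring

lemma pairing_linear {d : ℕ} (n : Fin d → ℤ) : IsLinearMap ℝ (pairing n) :=
  ⟨pairing_add n, fun c x => by simpa [smul_eq_mul] using pairing_smul n c x⟩

lemma lattice_add {d : ℕ} {x y : Fin d → ℝ} (hx : x ∈ latticePoints d)
    (hy : y ∈ latticePoints d) : x + y ∈ latticePoints d := by
  intro i
  obtain ⟨z, hz⟩ := hx i; obtain ⟨w, hw⟩ := hy i
  exact ⟨z + w, by push_cast [Pi.add_apply, hz, hw]; ring⟩

lemma lattice_nsmul {d : ℕ} (k : ℕ) {x : Fin d → ℝ} (hx : x ∈ latticePoints d) :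
    (k : ℝ) • x ∈ latticePoints d := by
  intro i
  obtain ⟨z, hz⟩ := hx i
  exact ⟨k * z, by push_cast [Pi.smul_apply, smul_eq_mul, hz]; ring⟩

lemma pairing_int {d : ℕ} (n : Fin d → ℤ) {x : Fin d → ℝ}
    (hx : x ∈ latticePoints d) : ∃ z : ℤ, pairing n x = (z : ℝ) := by
  choose f hf using hx
  refine ⟨∑ i, n i * f i, ?_⟩
  unfold pairing
  push_cast
  exact Finset.sum_congr rfl fun i _ => by rw [hf i]

lemma convex_poly {d m : ℕ} (n : Fin m → Fin d → ℤ) (c : Fin m → ℝ) :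
    Convex ℝ {x : Fin d → ℝ | ∀ i, pairing (n i) x ≥ c i} := by
  have he : {x : Fin d → ℝ | ∀ i, pairing (n i) x ≥ c i}
      = ⋂ i, {x | c i ≤ pairing (n i) x} := by ext x; simp [ge_iff_le]
  rw [he]
  exact convex_iInter fun i => convex_halfSpace_ge (pairing_linear (n i)) (c i)

lemma lattice_bounded_finite {d : ℕ} {S : Set (Fin d → ℝ)}
    (hlat : S ⊆ latticePoints d) (hb : Bornology.IsBounded S) : S.Finite := by
  obtain ⟨M, hM⟩ := isBounded_iff_forall_norm_le.mp hb
  have hsub : S ⊆ (fun z : Fin d → ℤ => fun i => (z i : ℝ)) ''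
      (Set.pi Set.univ fun _ : Fin d => (Set.Icc (-⌈M⌉) ⌈M⌉ : Set ℤ)) := by
    intro x hx
    choose z hz using hlat hx
    refine ⟨z, fun i _ => ?_, funext fun i => (hz i).symm⟩
    rw [Set.mem_Icc, ← abs_le]
    have h1 : |x i| ≤ M := le_trans (by simpa using norm_le_pi_norm x i) (hM x hx)
    have h2 : |(z i : ℝ)| ≤ (⌈M⌉ : ℝ) := by
      rw [← hz i]; exact h1.trans (Int.le_ceil M)
    exact_mod_cast h2
  exact Set.Finite.subset
    (Set.Finite.image _ (Set.Finite.pi fun _ => Set.finite_Icc _ _)) hsub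


lemma interior_pairing_lt {d m : ℕ} (n : Fin m → Fin d → ℤ) (c : Fin m → ℝ)
    (hn : ∀ i, ∃ j, n i j ≠ 0) {y : Fin d → ℝ}
    (hy : y ∈ interior {x : Fin d → ℝ | ∀ i, pairing (n i) x ≥ c i}) (i : Fin m) :
    pairing (n i) y > c i := by
  have hyS : ∀ k, pairing (n k) y ≥ c k := interior_subset hy
  by_contra hlt
  have heq : pairing (n i) y = c i := le_antisymm (not_lt.mp hlt) (hyS i)
  obtain ⟨ε, hε, hball⟩ := Metric.mem_nhds_iff.mp (mem_interior_iff_mem_nhds.mp hy)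
  obtain ⟨j0, hj0⟩ := hn i
  set v : Fin d → ℝ := fun j => -(n i j : ℝ) with hv
  have hvpair : pairing (n i) v < 0 := by
    have h1 : pairing (n i) v = -∑ j, ((n i j : ℝ) * (n i j)) := by
      simp [pairing, hv, mul_neg]
    rw [h1, neg_lt, neg_zero]
    refine Finset.sum_pos' (fun j _ => mul_self_nonneg _) ⟨j0, Finset.mem_univ _, ?_⟩
    have : ((n i j0 : ℝ)) ≠ 0 := Int.cast_ne_zero.mpr hj0
    exact mul_self_pos.mpr this
  have hvne : v ≠ 0 := by
    intro h0
    have := congrFun h0 j0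
    simp [hv] at this
    exact hj0 this
  have hvnorm : (0 : ℝ) < ‖v‖ := norm_pos_iff.mpr hvne
  set t : ℝ := ε / (2 * ‖v‖) with ht
  have htpos : 0 < t := by positivity
  have hmem : y + t • v ∈ Metric.ball y ε := by
    rw [Metric.mem_ball, dist_eq_norm, add_sub_cancel_left, norm_smul,
      Real.norm_of_nonneg htpos.le, ht]
    rw [div_mul_eq_mul_div, mul_comm]
    rw [div_lt_iff₀ (by positivity)]
    nlinarith
  have hcontr := (hball hmem) i
  rw [pairing_add, pairing_smul, heq] at hcontr
  nlinarith

lemma radstrom {E : Type*} [NormedAddCommGroup E] [NormedSpace ℝ E]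
    {A B C : Set E} (hB : Convex ℝ B) (hBc : IsClosed B)
    (hCne : C.Nonempty) (hCb : Bornology.IsBounded C)
    (hsub : A + C ⊆ B + C) : A ⊆ B := by
  obtain ⟨M, hM⟩ := isBounded_iff_forall_norm_le.mp hCb
  intro x hx
  have key : ∀ c : {c : E // c ∈ C}, ∃ p : E × E,
      p.1 ∈ B ∧ p.2 ∈ C ∧ x + c.1 = p.1 + p.2 := by
    rintro ⟨c, hc⟩
    obtain ⟨b, hb, c', hc', he⟩ := hsub (Set.add_mem_add hx hc)
    exact ⟨(b, c'), hb, hc', he.symm⟩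
  choose f hf1 hf2 hf3 using key
  obtain ⟨c0, hc0⟩ := hCne
  let cs : ℕ → {c : E // c ∈ C} := fun N =>
    Nat.rec ⟨c0, hc0⟩ (fun _ p => ⟨(f p).2, hf2 p⟩) N
  let bs : ℕ → E := fun N => (f (cs N)).1
  have hstep : ∀ N, x + (cs N).1 = bs N + (cs (N + 1)).1 := fun N => hf3 (cs N)
  have hbB : ∀ N, bs N ∈ B := fun N => hf1 (cs N)
  have main : ∀ N : ℕ, (N : ℝ) • x + (cs 0).1
      = (∑ k ∈ Finset.range N, bs k) + (cs N).1 := by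
    intro N
    induction N with
    | zero => simp
    | succ N ih =>
      have h1 : ((N + 1 : ℕ) : ℝ) • x = (N : ℝ) • x + x := by
        push_cast [add_smul, one_smul]; ring_nf
      rw [Finset.sum_range_succ, h1]
      calc (N : ℝ) • x + x + (cs 0).1
          = ((N : ℝ) • x + (cs 0).1) + x := by abel
        _ = ((∑ k ∈ Finset.range N, bs k) + (cs N).1) + x := by rw [ih]
        _ = (∑ k ∈ Finset.range N, bs k) + (x + (cs N).1) := by abel
        _ = (∑ k ∈ Finset.range N, bs k) + (bs N + (cs (N + 1)).1) := by
            rw [hstep N]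
        _ = ((∑ k ∈ Finset.range N, bs k) + bs N) + (cs (N + 1)).1 := by abel
  rw [← hBc.closure_eq]
  rw [Metric.mem_closure_iff]
  intro ε hε
  obtain ⟨N, hN⟩ := exists_nat_gt (2 * M / ε)
  have hMnn : 0 ≤ M := le_trans (norm_nonneg c0) (hM c0 hc0)
  set ν : ℝ := (N : ℝ) + 1 with hν
  have hνpos : (0 : ℝ) < ν := by positivity
  refine ⟨ν⁻¹ • (∑ k ∈ Finset.range (N + 1), bs k), ?_, ?_⟩
  · have hw : ∑ k ∈ Finset.range (N + 1), ν⁻¹ = 1 := by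
      rw [Finset.sum_const, Finset.card_range, nsmul_eq_mul]
      push_cast [hν]
      field_simp
    have := hB.sum_mem (t := Finset.range (N + 1)) (fun k _ => by positivity)
      hw (fun k _ => hbB k)
    rwa [← Finset.smul_sum] at this
  · have hmain := main (N + 1)
    have hx_eq : x - ν⁻¹ • (∑ k ∈ Finset.range (N + 1), bs k)
        = ν⁻¹ • ((cs (N + 1)).1 - (cs 0).1) := by
      have h2 : ν • x = (∑ k ∈ Finset.range (N + 1), bs k)
          + ((cs (N + 1)).1 - (cs 0).1) := by
        have hcast : ((N + 1 : ℕ) : ℝ) = ν := by push_cast [hν]; ring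
        rw [hcast] at hmain
        calc ν • x = (ν • x + (cs 0).1) - (cs 0).1 := by abel
          _ = ((∑ k ∈ Finset.range (N + 1), bs k) + (cs (N + 1)).1) - (cs 0).1 := by
              rw [hmain]
          _ = (∑ k ∈ Finset.range (N + 1), bs k)
              + ((cs (N + 1)).1 - (cs 0).1) := by abel
      calc x - ν⁻¹ • (∑ k ∈ Finset.range (N + 1), bs k)
          = ν⁻¹ • (ν • x) - ν⁻¹ • (∑ k ∈ Finset.range (N + 1), bs k) := by
            rw [smul_smul, inv_mul_cancel₀ hνpos.ne', one_smul]
        _ = ν⁻¹ • (ν • x - ∑ k ∈ Finset.range (N + 1), bs k) := by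
            rw [smul_sub]
        _ = ν⁻¹ • ((cs (N + 1)).1 - (cs 0).1) := by rw [h2]; congr 1; abel
    rw [dist_eq_norm, hx_eq, norm_smul, Real.norm_of_nonneg (by positivity)]
    have hbound : ‖(cs (N + 1)).1 - (cs 0).1‖ ≤ 2 * M := by
      calc ‖(cs (N + 1)).1 - (cs 0).1‖ ≤ ‖(cs (N + 1)).1‖ + ‖(cs 0).1‖ :=
            norm_sub_le _ _
        _ ≤ M + M := add_le_add (hM _ (cs (N + 1)).2) (hM _ (cs 0).2)
        _ = 2 * M := by ring
    have hlt : ν⁻¹ * (2 * M) < ε := by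
      rw [inv_mul_eq_div, div_lt_iff₀ hνpos]
      have : 2 * M < ε * (N : ℝ) + ε := by
        rcases le_or_gt (2 * M) 0 with hM0 | hM0
        · nlinarith
        · have := (div_lt_iff₀ hε).mp hN
          nlinarith
      calc (2 : ℝ) * M < ε * (N : ℝ) + ε := this
        _ = ε * ν := by rw [hν]; ring
    calc ν⁻¹ * ‖(cs (N + 1)).1 - (cs 0).1‖ ≤ ν⁻¹ * (2 * M) := by
          apply mul_le_mul_of_nonneg_left hbound (by positivity)
      _ < ε := hlt


theorem stmt_9 {d : ℕ} (hd : 1 ≤ d) (P : Set (Fin d → ℝ))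
    (hP : IsLatticePolytope P) (hfull : (interior P).Nonempty)
    {m : ℕ} (n : Fin m → Fin d → ℤ) (h : Fin m → ℤ)
    (hpres : IsFacetPresentation P n h)
    (a : ℕ) (ha : IsCodegree P a)
    (hdecomp : P = floorPoly ((a : ℝ) • P) + remPoly n h a) :
    (a : ℝ) • P = floorPoly ((a : ℝ) • P) +
        convexHull ℝ {x | x ∈ latticePoints d ∧ ∀ i, pairing (n i) x ≥ -1} ∧
    convexHull ℝ {x | x ∈ latticePoints d ∧ ∀ i, pairing (n i) x ≥ -1} =
      ((a - 1 : ℕ) : ℝ) • P + remPoly n h a := by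
  classical
  obtain ⟨V, hVlat, hPV⟩ := hP
  obtain ⟨hPeq, hgcd, -⟩ := hpres
  obtain ⟨ha1, ⟨p0, hp0int, hp0lat⟩, -⟩ := ha
  have Pconv : Convex ℝ P := hPV ▸ convex_convexHull ℝ _
  have Pcpt : IsCompact P := hPV ▸ V.finite_toSet.isCompact_convexHull (𝕜 := ℝ)
  have ha0 : (0 : ℝ) < (a : ℝ) := by exact_mod_cast ha1
  set c : ℝ := ((a - 1 : ℕ) : ℝ) with hcdef
  have hc : c = (a : ℝ) - 1 := by
    rw [hcdef, Nat.cast_sub ha1, Nat.cast_one]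
  have hcnn : 0 ≤ c := by positivity
  -- non-vanishing of the normals
  have hn : ∀ i, ∃ j, n i j ≠ 0 := by
    intro i
    by_contra hcon
    push_neg at hcon
    have : Finset.univ.gcd (n i) = 0 :=
      Finset.gcd_eq_zero_iff.mpr fun j _ => hcon j
    rw [hgcd i] at this
    exact one_ne_zero this
  -- description of a • P
  have aPdesc : (a : ℝ) • P = {x : Fin d → ℝ | ∀ i, pairing (n i) x ≥ -((a : ℝ) * (h i : ℝ))} := by
    ext x
    rw [Set.mem_smul_set_iff_inv_smul_mem₀ ha0.ne', hPeq]
    simp only [Set.mem_setOf_eq, pairing_smul]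
    constructor
    · intro hx i
      have := hx i
      rw [ge_iff_le, le_inv_mul_iff₀ ha0] at this
      linarith [this]
    · intro hx i
      have := hx i
      rw [ge_iff_le, le_inv_mul_iff₀ ha0]
      linarith [this]
  -- abbreviations
  set F : Set (Fin d → ℝ) := floorPoly ((a : ℝ) • P) with hF
  set S : Set (Fin d → ℝ) := {x | x ∈ latticePoints d ∧
      ∀ i, pairing (n i) x ≥ ((a : ℝ) - 1) * (h i : ℝ) - 1} with hS
  have hRem : remPoly n h a = convexHull ℝ S := rfl
  set T : Set (Fin d → ℝ) := {x | x ∈ latticePoints d ∧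
      ∀ i, pairing (n i) x ≥ -1} with hT
  set R : Set (Fin d → ℝ) := convexHull ℝ T with hR
  have hp0F : p0 ∈ F := subset_convexHull ℝ _ ⟨hp0int, hp0lat⟩
  -- bound for floor lattice points
  have hfloor_pts : ∀ y ∈ interior ((a : ℝ) • P) ∩ latticePoints d,
      ∀ i, pairing (n i) y ≥ -((a : ℝ) * (h i : ℝ)) + 1 := by
    rintro y ⟨hyint, hylat⟩ i
    rw [aPdesc] at hyint
    have hgt := interior_pairing_lt n (fun i => -((a : ℝ) * (h i : ℝ))) hn hyint i
    obtain ⟨z, hz⟩ := pairing_int (n i) hylat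
    have hcast : -((a : ℝ) * (h i : ℝ)) = ((-(a * h i) : ℤ) : ℝ) := by push_cast; ring
    rw [hz, hcast] at hgt ⊢
    have : (-(a * h i) : ℤ) < z := by exact_mod_cast hgt
    have : (-(a * h i) : ℤ) + 1 ≤ z := this
    calc ((-(a * h i) : ℤ) : ℝ) + 1 = (((-(a * h i) : ℤ) + 1 : ℤ) : ℝ) := by push_cast; ring
      _ ≤ (z : ℝ) := by exact_mod_cast this
  -- V ⊆ P and its consequences
  have hVP : (V : Set (Fin d → ℝ)) ⊆ P := hPV ▸ subset_convexHull ℝ _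
  -- A2 : c • P + remPoly ⊆ R
  have hA2 : c • P + remPoly n h a ⊆ R := by
    rw [hRem, hPV, ← convexHull_smul, ← convexHull_add, hR]
    apply convexHull_mono
    rintro w ⟨u, hu, s, hs, rfl⟩
    obtain ⟨v, hv, rfl⟩ := hu
    have hvP : v ∈ P := hVP hv
    have hvlat : v ∈ latticePoints d := hVlat hv
    constructor
    · exact lattice_add (hcdef ▸ lattice_nsmul (a - 1) hvlat) hs.1
    · intro i
      rw [pairing_add, pairing_smul]
      have h1 : pairing (n i) v ≥ -(h i : ℝ) := by
        rw [hPeq] at hvP; exact hvP i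
      have h2 : c * (-(h i : ℝ)) ≤ c * pairing (n i) v :=
        mul_le_mul_of_nonneg_left h1 hcnn
      have h3 : pairing (n i) s ≥ ((a : ℝ) - 1) * (h i : ℝ) - 1 := hs.2 i
      rw [hc] at h2 ⊢
      linarith
  -- A3 : F + R ⊆ a • P
  have hA3 : F + R ⊆ (a : ℝ) • P := by
    rw [aPdesc, hF, floorPoly, hR, ← convexHull_add]
    rw [← (convex_poly n fun i => -((a : ℝ) * (h i : ℝ))).convexHull_eq]
    apply convexHull_mono
    rintro w ⟨y, hy, t, ht, rfl⟩ i
    have h1 := hfloor_pts y hy i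
    have h2 := ht.2 i
    rw [pairing_add]
    linarith
  -- A1 : a • P = F + (c • P + remPoly)
  have hsplit : (a : ℝ) • P = c • P + P := by
    have hca : (a : ℝ) = c + 1 := by rw [hc]; ring
    rw [hca, Pconv.add_smul hcnn zero_le_one, one_smul]
  have hA1 : (a : ℝ) • P = F + (c • P + remPoly n h a) := by
    rw [hsplit]
    nth_rewrite 2 [hdecomp]
    exact add_left_comm _ _ _
  -- Statement 1
  have stmt1 : (a : ℝ) • P = F + R := by
    apply Subset.antisymm
    · rw [hA1]
      exact Set.add_subset_add_left hA2
    · exact hA3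
  refine ⟨stmt1, ?_⟩
  -- compactness facts
  have hSfin : S.Finite := by
    apply lattice_bounded_finite (fun s hs => hs.1)
    obtain ⟨MP, hMP⟩ := isBounded_iff_forall_norm_le.mp Pcpt.isBounded
    apply isBounded_iff_forall_norm_le.mpr
    refine ⟨MP + ‖p0‖, fun s hs => ?_⟩
    have hps : p0 + s ∈ P := by
      rw [hdecomp]
      exact Set.add_mem_add hp0F (subset_convexHull ℝ _ hs)
    calc ‖s‖ = ‖(p0 + s) - p0‖ := by congr 1; abel
      _ ≤ ‖p0 + s‖ + ‖p0‖ := norm_sub_le _ _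
      _ ≤ MP + ‖p0‖ := by linarith [hMP _ hps]
  have RemCpt : IsCompact (remPoly n h a) := by
    rw [hRem]; exact hSfin.isCompact_convexHull (𝕜 := ℝ)
  have Bcpt : IsCompact (c • P + remPoly n h a) :=
    (Pcpt.smul c).add RemCpt
  have Bconv : Convex ℝ (c • P + remPoly n h a) :=
    (Pconv.smul c).add (convex_convexHull ℝ S)
  have Fbd : Bornology.IsBounded F := by
    apply Bornology.IsBounded.subset ((Pcpt.smul (a : ℝ)).isBounded)
    rw [hF, floorPoly]
    exact convexHull_min (fun y hy => interior_subset hy.1) (Pconv.smul _)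
  -- Rådström cancellation
  have hcancel : R + F ⊆ (c • P + remPoly n h a) + F := by
    rw [add_comm R F, add_comm _ F, ← stmt1, ← hA1]
  have hRB : R ⊆ c • P + remPoly n h a :=
    radstrom Bconv Bcpt.isClosed ⟨p0, hp0F⟩ Fbd hcancel
  exact Subset.antisymm hRB hA2
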